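/- If k : (a,b) → ℝ is a positive twice differentiable function satisfying k''k = (7/4)(k')² − (4/3)k² − 4k⁴, then the quantity ((k')² − (16/9)k² + 16k⁴)·k^(−7/2) is constant on (a,b). -/

import Mathlib

/-- If k > 0 satisfies k''k = (7/4)(k')² − (4/3)k² − 4k⁴, then
((k')² − (16/9)k² + 16k⁴)·k^(−7/2) is constant on (a,b). -/
theorem stmt_5 (a b : ℝ) (k : ℝ → ℝ)
    (hpos : ∀ u ∈ Set.Ioo a b, 0 < k u)
    (hdiff : ∀ u ∈ Set.Ioo a b, DifferentiableAt ℝ k u ∧ DifferentiableAt ℝ (deriv k) u)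
    (hode : ∀ u ∈ Set.Ioo a b, deriv (deriv k) u * k u =
      (7 / 4) * (deriv k u) ^ 2 - (4 / 3) * (k u) ^ 2 - 4 * (k u) ^ 4) :
    ∃ C : ℝ, ∀ u ∈ Set.Ioo a b,
      ((deriv k u) ^ 2 - (16 / 9) * (k u) ^ 2 + 16 * (k u) ^ 4) * (k u) ^ (-(7 : ℝ) / 2) = C := by
  set F : ℝ → ℝ := fun u =>
    ((deriv k u) ^ 2 - (16 / 9) * (k u) ^ 2 + 16 * (k u) ^ 4) * (k u) ^ (-(7 : ℝ) / 2) with hF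
  have key : ∀ u ∈ Set.Ioo a b, HasDerivAt F 0 u := by
    intro u hu
    obtain ⟨hk, hk'⟩ := hdiff u hu
    have hq : 0 < k u := hpos u hu
    set p := deriv k u
    set q := k u
    set r := deriv (deriv k) u
    have h1 : HasDerivAt k p u := hk.hasDerivAt
    have h2 : HasDerivAt (deriv k) r u := hk'.hasDerivAt
    have hpoly : HasDerivAt (fun u => (deriv k u) ^ 2 - (16 / 9) * (k u) ^ 2 + 16 * (k u) ^ 4)
        (2 * p * r - (16 / 9) * (2 * q * p) + 16 * (4 * q ^ 3 * p)) u := by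
      have := (((h2.pow 2).sub ((h1.pow 2).const_mul (16 / 9 : ℝ))).add
        ((h1.pow 4).const_mul (16 : ℝ)))
      refine this.congr_deriv ?_
      ring
    have hrpow : HasDerivAt (fun u => (k u) ^ (-(7 : ℝ) / 2))
        ((-(7 : ℝ) / 2) * q ^ (-(7 : ℝ) / 2 - 1) * p) u := by
      exact (Real.hasDerivAt_rpow_const (p := -(7 : ℝ) / 2) (Or.inl hq.ne')).comp u h1
    have hprod := hpoly.mul hrpow
    have hzero : (2 * p * r - (16 / 9) * (2 * q * p) + 16 * (4 * q ^ 3 * p)) * q ^ (-(7 : ℝ) / 2)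
        + (p ^ 2 - 16 / 9 * q ^ 2 + 16 * q ^ 4) * ((-(7 : ℝ) / 2) * q ^ (-(7 : ℝ) / 2 - 1) * p)
        = 0 := by
      have hsub : q ^ (-(7 : ℝ) / 2 - 1) = q ^ (-(7 : ℝ) / 2) / q := by
        rw [Real.rpow_sub hq, Real.rpow_one]
      have hode' : r * q = 7 / 4 * p ^ 2 - 4 / 3 * q ^ 2 - 4 * q ^ 4 := hode u hu
      rw [hsub]
      have hne : q ≠ 0 := hq.ne'
      generalize q ^ (-(7 : ℝ) / 2) = s
      field_simp
      linear_combination (36 * p * s) * hode'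
    exact hprod.congr_deriv hzero
  rcases Set.eq_empty_or_nonempty (Set.Ioo a b) with he | ⟨x, hx⟩
  · exact ⟨0, fun u hu => absurd hu (by simp [he])⟩
  · refine ⟨F x, fun u hu => ?_⟩
    have hconv : Convex ℝ (Set.Ioo a b) := convex_Ioo a b
    have hdiffF : DifferentiableOn ℝ F (Set.Ioo a b) := fun y hy =>
      (key y hy).differentiableAt.differentiableWithinAt
    have hfd : ∀ y ∈ Set.Ioo a b, fderivWithin ℝ F (Set.Ioo a b) y = 0 := by
      intro y hy
      rw [fderivWithin_eq_fderiv (isOpen_Ioo.uniqueDiffOn y hy) (key y hy).differentiableAt]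
      have h0 : HasFDerivAt F (ContinuousLinearMap.smulRight (1 : ℝ →L[ℝ] ℝ) (0 : ℝ)) y :=
        (key y hy).hasFDerivAt
      rw [h0.fderiv]
      ext
      simp
    exact hconv.is_const_of_fderivWithin_eq_zero hdiffF hfd hu hx
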